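/- Let G be a connected graph with harmonic eigenvector f for λ₁ of the normalized Laplacian, let u and v be vertices minimizing and maximizing f respectively, and let vol_P = Σ_{z: f(z)≥0} d(z) and vol_N = Σ_{z: f(z)<0} d(z). Then λ₁ ≥ 2/(dist(u,v)·√(vol_P·vol_N)). -/

import Mathlib

open Finset
open scoped Classical

noncomputable section

variable {V : Type*}

/-- Dirichlet energy `∑_{u~v} (f u - f v)^2` (each edge counted once). -/
def SimpleGraph.energyForm [Fintype V] (G : SimpleGraph V) (f : V → ℝ) : ℝ :=
  (1/2) * ∑ x : V, ∑ y : V, if G.Adj x y then (f x - f y)^2 else 0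

/-- The weighted norm `∑_x f(x)^2 d(x)`. -/
def SimpleGraph.qForm [Fintype V] (G : SimpleGraph V) (f : V → ℝ) : ℝ :=
  ∑ x : V, (f x)^2 * (G.degree x : ℝ)

/-- The spectral gap of the normalized Laplacian, via the variational characterization
`λ₁ = inf { R(f) : ∑ f(u) d(u) = 0, f ≢ 0 }`. -/
def SimpleGraph.lambda1 [Fintype V] (G : SimpleGraph V) : ℝ :=
  sInf { r | ∃ f : V → ℝ, (∑ x : V, f x * (G.degree x : ℝ)) = 0 ∧ G.qForm f ≠ 0 ∧
    r = G.energyForm f / G.qForm f }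

private lemma walk_dart_sum_nonneg (G : SimpleGraph V) (f : V → ℝ) {a b : V}
    (p : G.Walk a b) :
    0 ≤ (p.darts.map (fun d => (f d.toProd.1 - f d.toProd.2)^2)).sum := by
  apply List.sum_nonneg
  intro x hx
  simp only [List.mem_map] at hx
  obtain ⟨d, -, rfl⟩ := hx
  positivity

private lemma walk_telescope (G : SimpleGraph V) (f : V → ℝ) {a b : V} (p : G.Walk a b) :
    (f b - f a)^2 ≤ (p.length : ℝ) *
      (p.darts.map (fun d => (f d.toProd.1 - f d.toProd.2)^2)).sum := by
  induction p with
  | nil => simp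
  | @cons x y z h q ih =>
    have hE := walk_dart_sum_nonneg G f q
    simp only [SimpleGraph.Walk.darts_cons, SimpleGraph.Walk.length_cons, List.map_cons,
      List.sum_cons, Nat.cast_add, Nat.cast_one]
    set L := (q.length : ℝ) with hLdef
    set E := (q.darts.map (fun d => (f d.toProd.1 - f d.toProd.2)^2)).sum with hEdef
    have hL : 0 ≤ L := Nat.cast_nonneg _
    rcases Nat.eq_zero_or_pos q.length with h0 | hpos
    · have hL0 : L = 0 := by rw [hLdef, h0]; norm_num
      have hA : f z = f y := by nlinarith [ih, sq_nonneg (f z - f y)]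
      rw [hA, hL0]
      nlinarith [hE]
    · have hL1 : (1:ℝ) ≤ L := by
        rw [hLdef]; exact_mod_cast hpos
      nlinarith [ih, sq_nonneg (L * (f y - f x) - (f z - f y)),
        mul_nonneg hL (sub_nonneg.mpr ih), hE, mul_nonneg hL hE]

private lemma dart_sum_eq (G : SimpleGraph V) [Fintype V] (f : V → ℝ) :
    ∑ d : G.Dart, (f d.toProd.1 - f d.toProd.2)^2
      = ∑ x : V, ∑ y : V, if G.Adj x y then (f x - f y)^2 else 0 := by
  classical
  have h1 : ∑ x : V, ∑ y : V, (if G.Adj x y then (f x - f y)^2 else 0)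
      = ∑ p ∈ (univ ×ˢ univ).filter (fun p : V × V => G.Adj p.1 p.2),
          (f p.1 - f p.2)^2 := by
    rw [Finset.sum_filter, Finset.sum_product]
  rw [h1]
  refine (Finset.sum_bij
    (fun (p : V × V) (hp : p ∈ (univ ×ˢ univ).filter (fun p : V × V => G.Adj p.1 p.2)) =>
      (⟨p, by simpa using hp⟩ : G.Dart)) ?_ ?_ ?_ ?_).symm
  · intro a ha; exact Finset.mem_univ _
  · intro a ha b hb hab
    simpa [SimpleGraph.Dart.ext_iff] using hab
  · intro d _
    refine ⟨d.toProd, by simpa using d.adj, ?_⟩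
    exact SimpleGraph.Dart.ext _ _ rfl
  · intro a ha; rfl

private lemma path_dart_sum_le_energy (G : SimpleGraph V) [Fintype V] (f : V → ℝ)
    {a b : V} (p : G.Walk a b) (hp : p.IsPath) :
    (p.darts.map (fun d => (f d.toProd.1 - f d.toProd.2)^2)).sum ≤ G.energyForm f := by
  classical
  have hedges : (p.darts.map SimpleGraph.Dart.edge).Nodup := hp.isTrail.edges_nodup
  have hnd : p.darts.Nodup := hedges.of_map _
  have hinj : ∀ x ∈ p.darts, ∀ y ∈ p.darts,
      SimpleGraph.Dart.edge x = SimpleGraph.Dart.edge y → x = y :=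
    List.inj_on_of_nodup_map hedges
  have hndsymm : (p.darts.map SimpleGraph.Dart.symm).Nodup :=
    hnd.map (fun d₁ d₂ h => by
      simpa using congrArg SimpleGraph.Dart.symm h)
  have hdisj : p.darts.Disjoint (p.darts.map SimpleGraph.Dart.symm) := by
    intro d hd hd'
    simp only [List.mem_map] at hd'
    obtain ⟨e, he, rfl⟩ := hd'
    have : e.symm = e := hinj _ hd _ he (SimpleGraph.Dart.edge_symm e)
    exact SimpleGraph.Dart.symm_ne e this
  have hlnd : (p.darts ++ p.darts.map SimpleGraph.Dart.symm).Nodup :=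
    List.Nodup.append hnd hndsymm hdisj
  have hmapsymm : (p.darts.map SimpleGraph.Dart.symm).map
        (fun d => (f d.toProd.1 - f d.toProd.2)^2)
      = p.darts.map (fun d => (f d.toProd.1 - f d.toProd.2)^2) := by
    rw [List.map_map]
    refine List.map_congr_left ?_
    intro d _
    have h1 : (SimpleGraph.Dart.symm d).toProd = d.toProd.swap := rfl
    simp only [Function.comp_apply, h1, Prod.fst_swap, Prod.snd_swap]
    ring
  have hsum : (((p.darts ++ p.darts.map SimpleGraph.Dart.symm)).map
        (fun d => (f d.toProd.1 - f d.toProd.2)^2)).sum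
      = 2 * (p.darts.map (fun d => (f d.toProd.1 - f d.toProd.2)^2)).sum := by
    rw [List.map_append, List.sum_append, hmapsymm]; ring
  have hfin : ((p.darts ++ p.darts.map SimpleGraph.Dart.symm)).toFinset.sum
        (fun d => (f d.toProd.1 - f d.toProd.2)^2)
      = (((p.darts ++ p.darts.map SimpleGraph.Dart.symm)).map
        (fun d => (f d.toProd.1 - f d.toProd.2)^2)).sum :=
    List.sum_toFinset _ hlnd
  have hle : ((p.darts ++ p.darts.map SimpleGraph.Dart.symm)).toFinset.sum
        (fun d => (f d.toProd.1 - f d.toProd.2)^2)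
      ≤ ∑ d : G.Dart, (f d.toProd.1 - f d.toProd.2)^2 := by
    apply Finset.sum_le_sum_of_subset_of_nonneg (Finset.subset_univ _)
    intro i _ _
    positivity
  have henergy : ∑ d : G.Dart, (f d.toProd.1 - f d.toProd.2)^2 = 2 * G.energyForm f := by
    rw [dart_sum_eq G f, SimpleGraph.energyForm]; ring
  rw [henergy] at hle
  rw [hfin, hsum] at hle
  linarith

/-- Lemma: for a connected graph with harmonic eigenvector `f` for `λ₁`, extremal vertices
`u`, `v`, we have `λ₁ ≥ 2 / (dist(u,v) √(vol_P · vol_N))`. -/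
theorem lambda1_ge_two_div_dist_mul_sqrt [Fintype V] (G : SimpleGraph V)
    (hG : G.Connected) (f : V → ℝ)
    (hf0 : (∑ x : V, f x * (G.degree x : ℝ)) = 0) (hfq : G.qForm f ≠ 0)
    (hmin : G.energyForm f / G.qForm f = G.lambda1)
    (u v : V) (hu : ∀ z, f u ≤ f z) (hv : ∀ z, f z ≤ f v) :
    G.lambda1 ≥ 2 / ((G.dist u v : ℝ) *
      Real.sqrt ((∑ z ∈ univ.filter (fun z => 0 ≤ f z), (G.degree z : ℝ)) *
        (∑ z ∈ univ.filter (fun z => f z < 0), (G.degree z : ℝ)))) := by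
  classical
  have hnt : Nontrivial V := by
    rcases subsingleton_or_nontrivial V with h | h
    · exfalso
      apply hfq
      apply Finset.sum_eq_zero
      intro x _
      have hx : G.neighborFinset x = ∅ := by
        ext y
        simp only [SimpleGraph.mem_neighborFinset, Finset.notMem_empty, iff_false]
        intro hadj
        exact hadj.ne (Subsingleton.elim _ _)
      rw [SimpleGraph.degree, hx]
      simp
    · exact h
  have hdeg : ∀ z : V, 0 < G.degree z := by
    intro z
    obtain ⟨w, hw⟩ := exists_ne z
    obtain ⟨p⟩ := hG.preconnected z w
    cases p with
    | nil => exact absurd rfl hw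
    | cons h q => exact (G.degree_pos_iff_exists_adj z).mpr ⟨_, h⟩
  have hdegR : ∀ z : V, (0:ℝ) < (G.degree z : ℝ) := fun z => by exact_mod_cast hdeg z
  have hQnonneg : 0 ≤ G.qForm f := by
    apply Finset.sum_nonneg; intro x _; positivity
  have hQpos : 0 < G.qForm f := lt_of_le_of_ne hQnonneg (Ne.symm hfq)
  have hfv : 0 < f v := by
    by_contra h
    push_neg at h
    apply hfq
    have hzero : ∀ x ∈ (univ : Finset V), f x * (G.degree x : ℝ) = 0 := by
      have hnn : ∀ x ∈ (univ : Finset V), 0 ≤ -(f x * (G.degree x : ℝ)) := by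
        intro x _
        have hx : f x ≤ 0 := le_trans (hv x) h
        nlinarith [hdegR x]
      have hsum : ∑ x : V, -(f x * (G.degree x : ℝ)) = 0 := by
        rw [Finset.sum_neg_distrib, hf0]; ring
      intro x hx
      have := (Finset.sum_eq_zero_iff_of_nonneg hnn).mp hsum x hx
      linarith
    apply Finset.sum_eq_zero
    intro x hx
    have hfx : f x = 0 := by
      rcases mul_eq_zero.mp (hzero x hx) with h3 | h3
      · exact h3
      · exact absurd h3 (hdegR x).ne'
    rw [hfx]; ring
  have hfu : f u < 0 := by
    by_contra h
    push_neg at h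
    apply hfq
    have hzero : ∀ x ∈ (univ : Finset V), f x * (G.degree x : ℝ) = 0 := by
      have hnn : ∀ x ∈ (univ : Finset V), 0 ≤ f x * (G.degree x : ℝ) := by
        intro x _
        have hx : 0 ≤ f x := le_trans h (hu x)
        positivity
      exact fun x hx => (Finset.sum_eq_zero_iff_of_nonneg hnn).mp hf0 x hx
    apply Finset.sum_eq_zero
    intro x hx
    have hfx : f x = 0 := by
      rcases mul_eq_zero.mp (hzero x hx) with h3 | h3
      · exact h3
      · exact absurd h3 (hdegR x).ne'
    rw [hfx]; ring
  have huv : u ≠ v := fun h => by rw [h] at hfu; linarith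
  set a : ℝ := f v with ha
  set b : ℝ := -f u with hb
  have hbpos : 0 < b := by rw [hb]; linarith
  have habpos : 0 < a + b := by have := hfv; linarith
  set VP : ℝ := ∑ z ∈ univ.filter (fun z => 0 ≤ f z), (G.degree z : ℝ) with hVP
  set VN : ℝ := ∑ z ∈ univ.filter (fun z => f z < 0), (G.degree z : ℝ) with hVN
  have hVPpos : 0 < VP := by
    rw [hVP]
    apply Finset.sum_pos
    · intro i _; exact hdegR i
    · exact ⟨v, by simp [hfv.le]; exact hfv.le⟩
  have hVNpos : 0 < VN := by
    rw [hVN]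
    apply Finset.sum_pos
    · intro i _; exact hdegR i
    · exact ⟨u, by simp [hfu]⟩
  set S : ℝ := ∑ z ∈ univ.filter (fun z => 0 ≤ f z), f z * (G.degree z : ℝ) with hS
  have hfilter : (univ.filter (fun z => ¬ 0 ≤ f z)) = univ.filter (fun z => f z < 0) := by
    apply Finset.filter_congr
    intro x _
    simp [not_le]
  have hneg : ∑ z ∈ univ.filter (fun z => f z < 0), f z * (G.degree z : ℝ) = -S := by
    have h1 := Finset.sum_filter_add_sum_filter_not (univ : Finset V) (fun z => 0 ≤ f z)
      (fun z => f z * (G.degree z : ℝ))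
    rw [hfilter, hf0] at h1
    rw [hS]; linarith
  have hQsplit : G.qForm f =
      (∑ z ∈ univ.filter (fun z => 0 ≤ f z), (f z)^2 * (G.degree z : ℝ))
      + ∑ z ∈ univ.filter (fun z => f z < 0), (f z)^2 * (G.degree z : ℝ) := by
    rw [SimpleGraph.qForm, ← hfilter,
      Finset.sum_filter_add_sum_filter_not (univ : Finset V) (fun z => 0 ≤ f z)]
  have hQP : ∑ z ∈ univ.filter (fun z => 0 ≤ f z), (f z)^2 * (G.degree z : ℝ)
      ≤ a * S := by
    rw [hS, Finset.mul_sum]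
    apply Finset.sum_le_sum
    intro i hi
    simp only [Finset.mem_filter] at hi
    have h1 : f i ≤ a := hv i
    have h2 : 0 ≤ f i := hi.2
    nlinarith [mul_nonneg (mul_nonneg (sub_nonneg.mpr h1) h2) (hdegR i).le]
  have hQN : ∑ z ∈ univ.filter (fun z => f z < 0), (f z)^2 * (G.degree z : ℝ)
      ≤ b * S := by
    have hb2 : b * S = ∑ z ∈ univ.filter (fun z => f z < 0),
        b * (-(f z * (G.degree z : ℝ))) := by
      rw [← Finset.mul_sum, Finset.sum_neg_distrib, hneg]; ring
    rw [hb2]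
    apply Finset.sum_le_sum
    intro i hi
    simp only [Finset.mem_filter] at hi
    have h2 : -f i ≤ b := by rw [hb]; have := hu i; linarith
    have h3 : f i < 0 := hi.2
    nlinarith [mul_nonneg (mul_nonneg (sub_nonneg.mpr h2) (neg_nonneg.mpr h3.le))
      (hdegR i).le]
  have hQS : G.qForm f ≤ (a + b) * S := by
    rw [hQsplit]; nlinarith [hQP, hQN]
  have hSpos : 0 < S := by
    by_contra hc
    push_neg at hc
    have h1 : (a + b) * S ≤ 0 := mul_nonpos_of_nonneg_of_nonpos habpos.le hc
    linarith [hQpos, hQS]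
  have hSa : S ≤ a * VP := by
    rw [hS, hVP, Finset.mul_sum]
    apply Finset.sum_le_sum
    intro i hi
    exact mul_le_mul_of_nonneg_right (hv i) (hdegR i).le
  have hSb : S ≤ b * VN := by
    rw [hVN, Finset.mul_sum,
      show S = ∑ z ∈ univ.filter (fun z => f z < 0), -(f z * (G.degree z : ℝ)) by
        rw [Finset.sum_neg_distrib, hneg]; ring]
    apply Finset.sum_le_sum
    intro i hi
    have h2 : -f i ≤ b := by rw [hb]; have := hu i; linarith
    have h3 := mul_le_mul_of_nonneg_right h2 (hdegR i).le
    linarith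
  have hsqrtVnn : 0 ≤ Real.sqrt (VP * VN) := Real.sqrt_nonneg _
  have hSsqrt : S ≤ Real.sqrt (a * b) * Real.sqrt (VP * VN) := by
    rw [← Real.sqrt_mul (by positivity),
      show a * b * (VP * VN) = (a * VP) * (b * VN) by ring]
    refine (Real.le_sqrt' hSpos).mpr ?_
    nlinarith [hSa, hSb, hSpos]
  have h2ab : 2 * Real.sqrt (a * b) ≤ a + b := by
    rw [Real.sqrt_mul hfv.le]
    nlinarith [sq_nonneg (Real.sqrt a - Real.sqrt b), Real.sq_sqrt hfv.le,
      Real.sq_sqrt hbpos.le]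
  obtain ⟨p, hpath, hplen⟩ := hG.exists_path_of_dist u v
  have hDpos : 0 < G.dist u v := hG.pos_dist_of_ne huv
  have hDR : (1:ℝ) ≤ (G.dist u v : ℝ) := by exact_mod_cast hDpos
  have hE2 : (a + b)^2 ≤ (G.dist u v : ℝ) * G.energyForm f := by
    have h1 := walk_telescope G f p
    have h2 := path_dart_sum_le_energy G f p hpath
    rw [hplen] at h1
    have h3 : (f v - f u)^2 = (a + b)^2 := by rw [ha, hb]; ring
    rw [h3] at h1
    calc (a + b)^2
        ≤ (G.dist u v : ℝ) *
          (p.darts.map (fun d => (f d.toProd.1 - f d.toProd.2)^2)).sum := h1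
      _ ≤ (G.dist u v : ℝ) * G.energyForm f :=
          mul_le_mul_of_nonneg_left h2 (by linarith)
  have hRpos : 0 < (G.dist u v : ℝ) * Real.sqrt (VP * VN) := by
    have h1 : 0 < Real.sqrt (VP * VN) := Real.sqrt_pos.mpr (by positivity)
    exact mul_pos (by linarith) h1
  rw [ge_iff_le, ← hmin, div_le_div_iff₀ hRpos hQpos]
  have s1 : 2 * S ≤ (a + b) * Real.sqrt (VP * VN) := by
    calc 2 * S ≤ 2 * (Real.sqrt (a * b) * Real.sqrt (VP * VN)) := by linarith
      _ = (2 * Real.sqrt (a * b)) * Real.sqrt (VP * VN) := by ring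
      _ ≤ (a + b) * Real.sqrt (VP * VN) :=
          mul_le_mul_of_nonneg_right h2ab hsqrtVnn
  calc 2 * G.qForm f ≤ 2 * ((a + b) * S) := by linarith
    _ = (a + b) * (2 * S) := by ring
    _ ≤ (a + b) * ((a + b) * Real.sqrt (VP * VN)) :=
        mul_le_mul_of_nonneg_left s1 habpos.le
    _ = (a + b)^2 * Real.sqrt (VP * VN) := by ring
    _ ≤ ((G.dist u v : ℝ) * G.energyForm f) * Real.sqrt (VP * VN) :=
        mul_le_mul_of_nonneg_right hE2 hsqrtVnn
    _ = G.energyForm f * ((G.dist u v : ℝ) * Real.sqrt (VP * VN)) := by ring
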